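/- For any R > 0, the sum of |\widehat{1_S}(χ)|³ over all characters χ of (ℤ/nℤ)ⁿ with entropy H(χ) ≥ R is at most exp((3−R)n/2) · (n!/nⁿ)³. -/

import Mathlib

open Finset

/-- `e(x) = exp(2πi x/n)` for `x ∈ ZMod n`, realizing the identification of the dual of
`ZMod n` with `(1/n)ℤ/ℤ`. -/
noncomputable def eZ (n : ℕ) (x : ZMod n) : ℂ :=
  Complex.exp (2 * Real.pi * Complex.I * (x.val : ℂ) / (n : ℂ))

lemma eZ_zero (n : ℕ) [NeZero n] : eZ n 0 = 1 := by
  simp [eZ, ZMod.val_zero]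

lemma eZ_add (n : ℕ) [NeZero n] (a b : ZMod n) : eZ n (a + b) = eZ n a * eZ n b := by
  have hn : (n:ℂ) ≠ 0 := Nat.cast_ne_zero.2 (NeZero.ne n)
  unfold eZ
  rw [← Complex.exp_add, Complex.exp_eq_exp_iff_exists_int]
  refine ⟨-(((a.val + b.val) / n : ℕ) : ℤ), ?_⟩
  have h2 : ((a.val + b.val) % n : ℕ) + (n : ℕ) * ((a.val + b.val) / n : ℕ)
      = a.val + b.val := Nat.mod_add_div _ _
  have h3 : (((a+b).val : ℕ) : ℂ) + (n:ℂ) * (((a.val + b.val) / n : ℕ) : ℂ)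
      = (a.val : ℂ) + (b.val : ℂ) := by
    rw [ZMod.val_add]
    exact_mod_cast congrArg (Nat.cast : ℕ → ℂ) h2
  have gen : ∀ x y z w : ℂ, x = y + z + w * n → x / n = y / n + z / n + w := by
    intro x y z w h
    field_simp
    linear_combination h
  apply gen
  rw [Int.cast_neg, Int.cast_natCast]
  linear_combination (2 * Real.pi * Complex.I) * h3

lemma eZ_ne_zero (n : ℕ) (x : ZMod n) : eZ n x ≠ 0 := Complex.exp_ne_zero _

lemma eZ_conj (n : ℕ) [NeZero n] (x : ZMod n) :
    (starRingEnd ℂ) (eZ n x) = eZ n (-x) := by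
  have h1 : eZ n x * (starRingEnd ℂ) (eZ n x) = 1 := by
    rw [eZ, ← Complex.exp_conj, ← Complex.exp_add]
    have : (starRingEnd ℂ) (2 * Real.pi * Complex.I * (x.val : ℂ) / n)
        = -(2 * Real.pi * Complex.I * (x.val : ℂ) / n) := by
      simp only [map_div₀, map_mul, Complex.conj_I, Complex.conj_natCast, Complex.conj_ofReal,
        map_ofNat]
      ring
    rw [this, add_neg_cancel, Complex.exp_zero]
  have h2 : eZ n x * eZ n (-x) = 1 := by
    rw [← eZ_add, add_neg_cancel, eZ_zero]
  exact mul_left_cancel₀ (eZ_ne_zero n x) (h1.trans h2.symm)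

lemma eZ_sum_eq_prod (n : ℕ) [NeZero n] {ι : Type*} (s : Finset ι) (g : ι → ZMod n) :
    eZ n (∑ i ∈ s, g i) = ∏ i ∈ s, eZ n (g i) := by
  classical
  induction s using Finset.induction with
  | empty => simp [eZ_zero]
  | insert _ _ h ih => rw [Finset.sum_insert h, Finset.prod_insert h, eZ_add, ih]

lemma twoPiI_ne_zero : (2 * Real.pi * Complex.I : ℂ) ≠ 0 :=
  mul_ne_zero (mul_ne_zero two_ne_zero (Complex.ofReal_ne_zero.2 Real.pi_ne_zero))
    Complex.I_ne_zero

lemma aux_exp_ne_one (n m : ℕ) (h0 : 0 < m) (hm : m < n) :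
    Complex.exp (2 * Real.pi * Complex.I * (m : ℂ) / (n : ℂ)) ≠ 1 := by
  have hn : (n:ℂ) ≠ 0 := Nat.cast_ne_zero.2 (by omega)
  intro h
  rw [Complex.exp_eq_one_iff] at h
  obtain ⟨k, hk⟩ := h
  rw [div_eq_iff hn] at hk
  have h1 : (2*Real.pi*Complex.I) * (m:ℂ) = (2*Real.pi*Complex.I) * ((k:ℂ)*(n:ℂ)) := by
    linear_combination hk
  have h2 : (m:ℂ) = (k:ℂ)*(n:ℂ) := mul_left_cancel₀ twoPiI_ne_zero h1
  have h3 : (m:ℤ) = k * n := by exact_mod_cast h2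
  have hn' : (0:ℤ) < n := by exact_mod_cast by omega
  have hm' : (m:ℤ) < n := by exact_mod_cast hm
  have h0' : (0:ℤ) < m := by exact_mod_cast h0
  rcases lt_or_ge k 1 with hl | hl
  · have : k ≤ 0 := by omega
    nlinarith
  · nlinarith

lemma eZ_ne_one (n : ℕ) [NeZero n] {c : ZMod n} (hc : c ≠ 0) : eZ n c ≠ 1 := by
  have h0 : 0 < c.val := Nat.pos_of_ne_zero (fun h => hc (by rwa [← ZMod.val_eq_zero]))
  exact aux_exp_ne_one n c.val h0 (ZMod.val_lt c)

lemma eZ_orth (n : ℕ) [NeZero n] (c : ZMod n) :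
    ∑ r : ZMod n, eZ n (r * c) = if c = 0 then (n : ℂ) else 0 := by
  split_ifs with h
  · simp [h, eZ_zero, ZMod.card]
  · have key : eZ n c * ∑ r : ZMod n, eZ n (r * c) = ∑ r : ZMod n, eZ n (r * c) := by
      rw [Finset.mul_sum]
      rw [← Equiv.sum_comp (Equiv.addRight (1 : ZMod n)) (fun r => eZ n (r * c))]
      apply Finset.sum_congr rfl
      intro r _
      rw [← eZ_add]
      congr 1
      simp [add_mul]
      ring
    have h2 : (eZ n c - 1) * ∑ r : ZMod n, eZ n (r * c) = 0 := by
      rw [sub_mul, one_mul, key, sub_self]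
    rcases mul_eq_zero.mp h2 with h1 | h1
    · exact absurd (by linear_combination h1 : eZ n c = 1) (eZ_ne_one n h)
    · exact h1

/-- The Fourier coefficient `\widehat{1_S}(r₁,…,r_n)` of the set `S` of injective
`n`-tuples in `(ZMod n)ⁿ`, namely `n^{-n} ∑_{x ∈ S} e(-∑ᵢ rᵢ xᵢ)`. -/
noncomputable def fourierS (n : ℕ) [NeZero n] (r : Fin n → ZMod n) : ℂ :=
  ((n : ℂ) ^ n)⁻¹ *
    ∑ x ∈ Finset.univ.filter (fun x : Fin n → ZMod n => Function.Injective x),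
      eZ n (-(∑ i, r i * x i))

lemma card_S (n : ℕ) [NeZero n] :
    (Finset.univ.filter (fun x : Fin n → ZMod n => Function.Injective x)).card
      = n.factorial := by
  classical
  rw [← Fintype.card_subtype]
  rw [Fintype.card_congr (Equiv.subtypeInjectiveEquivEmbedding (Fin n) (ZMod n))]
  rw [Fintype.card_embedding_eq]
  simp [ZMod.card, Fintype.card_fin, Nat.descFactorial_self]

lemma eZ_fullsum (n : ℕ) [NeZero n] (c : Fin n → ZMod n) :
    ∑ r : Fin n → ZMod n, eZ n (∑ i, r i * c i)
      = if c = 0 then ((n:ℂ))^n else 0 := by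
  classical
  have h1 : ∀ r : Fin n → ZMod n, eZ n (∑ i, r i * c i) = ∏ i, eZ n (r i * c i) :=
    fun r => eZ_sum_eq_prod n univ _
  simp_rw [h1]
  rw [← Fintype.prod_sum (fun i (t : ZMod n) => eZ n (t * c i))]
  simp_rw [eZ_orth]
  split_ifs with h
  · subst h
    simp
  · have : ∃ i, c i ≠ 0 := by
      by_contra hc
      push_neg at hc
      exact h (funext hc)
    obtain ⟨i, hi⟩ := this
    apply Finset.prod_eq_zero (Finset.mem_univ i)
    simp [hi]

lemma parseval_complex (n : ℕ) [NeZero n] :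
    ∑ r : Fin n → ZMod n, fourierS n r * (starRingEnd ℂ) (fourierS n r)
      = (n.factorial : ℂ) / (n:ℂ)^n := by
  classical
  set S := Finset.univ.filter (fun x : Fin n → ZMod n => Function.Injective x) with hS
  have hN : ((n:ℂ)^n) ≠ 0 := pow_ne_zero _ (Nat.cast_ne_zero.2 (NeZero.ne n))
  have hconj : ∀ r : Fin n → ZMod n, (starRingEnd ℂ) (fourierS n r)
      = ((n:ℂ)^n)⁻¹ * ∑ y ∈ S, eZ n (∑ i, r i * y i) := by
    intro r
    rw [fourierS, map_mul, map_inv₀, map_pow, Complex.conj_natCast, map_sum]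
    congr 1
    apply Finset.sum_congr rfl
    intro y _
    rw [eZ_conj, neg_neg]
  have hprod : ∀ r : Fin n → ZMod n, fourierS n r * (starRingEnd ℂ) (fourierS n r)
      = ((n:ℂ)^n)⁻¹ * ((n:ℂ)^n)⁻¹ *
        ∑ x ∈ S, ∑ y ∈ S, eZ n (∑ i, r i * (y i - x i)) := by
    intro r
    rw [hconj, fourierS, mul_mul_mul_comm]
    congr 1
    rw [Finset.sum_mul_sum]
    apply Finset.sum_congr rfl
    intro x _
    apply Finset.sum_congr rfl
    intro y _
    rw [← eZ_add]
    congr 1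
    simp only [mul_sub]
    rw [Finset.sum_sub_distrib]
    ring
  simp_rw [hprod]
  rw [← Finset.mul_sum, Finset.sum_comm]
  have hinner : ∀ x ∈ S, (∑ r : Fin n → ZMod n, ∑ y ∈ S,
      eZ n (∑ i, r i * (y i - x i))) = (n:ℂ)^n := by
    intro x hx
    rw [Finset.sum_comm]
    have : ∀ y ∈ S, (∑ r : Fin n → ZMod n, eZ n (∑ i, r i * (y i - x i)))
        = if y = x then (n:ℂ)^n else 0 := by
      intro y _
      rw [eZ_fullsum]
      congr 1
      · simp only [eq_iff_iff]
        constructor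
        · intro h
          funext i
          have := congrFun h i
          simpa [sub_eq_zero] using this
        · intro h; subst h; funext i; simp
    rw [Finset.sum_congr rfl this, Finset.sum_ite_eq' S x (fun _ => (n:ℂ)^n), if_pos hx]
  rw [Finset.sum_congr rfl hinner, Finset.sum_const, card_S n, nsmul_eq_mul]
  field_simp

lemma parseval (n : ℕ) [NeZero n] :
    ∑ r : Fin n → ZMod n, ‖fourierS n r‖^2
      = (n.factorial : ℝ) / (n:ℝ)^n := by
  have h := parseval_complex n
  have h2 : ∀ r : Fin n → ZMod n, fourierS n r * (starRingEnd ℂ) (fourierS n r)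
      = ((‖fourierS n r‖^2 : ℝ) : ℂ) := by
    intro r
    rw [Complex.mul_conj, Complex.sq_norm]
  rw [Finset.sum_congr rfl (fun r _ => h2 r)] at h
  rw [← Complex.ofReal_sum] at h
  have h3 : (((n.factorial : ℝ) / (n:ℝ)^n : ℝ) : ℂ) = (n.factorial : ℂ) / (n:ℂ)^n := by
    push_cast
    ring
  rw [← h3] at h
  exact_mod_cast h

lemma fourierS_comp (n : ℕ) [NeZero n] (r : Fin n → ZMod n) (σ : Equiv.Perm (Fin n)) :
    fourierS n (r ∘ σ) = fourierS n r := by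
  classical
  unfold fourierS
  congr 1
  apply Finset.sum_equiv (Equiv.arrowCongr σ (Equiv.refl (ZMod n)))
  · intro x
    simp only [Finset.mem_filter, Finset.mem_univ, true_and]
    constructor
    · intro h
      have : (Equiv.arrowCongr σ (Equiv.refl (ZMod n)) x) = x ∘ σ.symm := rfl
      rw [this]
      exact h.comp σ.symm.injective
    · intro h
      have : x = (x ∘ σ.symm) ∘ σ := by funext i; simp
      rw [this]
      exact h.comp σ.injective
  · intro x _
    congr 1
    have : (Equiv.arrowCongr σ (Equiv.refl (ZMod n)) x) = x ∘ σ.symm := rfl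
    rw [this]
    congr 1
    rw [← Equiv.sum_comp σ (fun j => r j * (x ∘ σ.symm) j)]
    apply Finset.sum_congr rfl
    intro i _
    simp

lemma stab_card (n : ℕ) [NeZero n] (r : Fin n → ZMod n) :
    (Finset.univ.filter fun σ : Equiv.Perm (Fin n) => r ∘ σ = r).card
      = ∏ v : ZMod n, ((Finset.univ.filter fun i => r i = v).card).factorial := by
  classical
  rw [← Fintype.card_subtype, DomMulAct.stabilizer_card r]
  apply Finset.prod_congr rfl
  intro v _
  congr 1
  rw [Fintype.card_subtype]

lemma fiber_card (n : ℕ) [NeZero n] (r : Fin n → ZMod n) (τ : Equiv.Perm (Fin n)) :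
    (Finset.univ.filter fun σ : Equiv.Perm (Fin n) => r ∘ σ = r ∘ τ).card
      = (Finset.univ.filter fun σ : Equiv.Perm (Fin n) => r ∘ σ = r).card := by
  classical
  apply Finset.card_bij (fun σ _ => σ * τ⁻¹)
  · intro σ hσ
    simp only [Finset.mem_filter, Finset.mem_univ, true_and] at hσ ⊢
    funext i
    have := congrFun hσ (τ⁻¹ i)
    simpa using this
  · intro σ hσ σ' hσ' h
    exact mul_right_cancel h
  · intro ρ hρ
    simp only [Finset.mem_filter, Finset.mem_univ, true_and] at hρ
    refine ⟨ρ * τ, ?_, by group⟩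
    simp only [Finset.mem_filter, Finset.mem_univ, true_and]
    funext i
    have := congrFun hρ (τ i)
    simpa using this

lemma orbit_count (n : ℕ) [NeZero n] (r : Fin n → ZMod n) :
    ((Finset.univ : Finset (Equiv.Perm (Fin n))).image (fun σ : Equiv.Perm (Fin n) => r ∘ ⇑σ)).card
      * ∏ v : ZMod n, ((Finset.univ.filter fun i => r i = v).card).factorial
      = n.factorial := by
  classical
  have h := Finset.card_eq_sum_card_fiberwise
    (f := fun σ : Equiv.Perm (Fin n) => r ∘ σ) (s := Finset.univ)
    (t := Finset.univ.image (fun σ : Equiv.Perm (Fin n) => r ∘ ⇑σ))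
    (fun σ _ => Finset.mem_image_of_mem _ (Finset.mem_univ σ))
  rw [Finset.card_univ, Fintype.card_perm, Fintype.card_fin] at h
  have h2 : ∀ b ∈ Finset.univ.image (fun σ : Equiv.Perm (Fin n) => r ∘ ⇑σ),
      (Finset.univ.filter fun σ : Equiv.Perm (Fin n) => r ∘ σ = b).card
        = ∏ v : ZMod n, ((Finset.univ.filter fun i => r i = v).card).factorial := by
    intro b hb
    obtain ⟨τ, _, rfl⟩ := Finset.mem_image.mp hb
    rw [fiber_card, stab_card]
  rw [Finset.sum_congr rfl h2, Finset.sum_const, smul_eq_mul] at h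
  omega

/-- The entropy `H(χ) = (1/n) log multinomial(n; a₁,…,a_k)`, where the `aᵥ` are the
multiplicities of the values of `χ`. -/
noncomputable def entropyH (n : ℕ) [NeZero n] (r : Fin n → ZMod n) : ℝ :=
  Real.log ((n.factorial : ℝ) /
    ∏ v : ZMod n, ((Finset.univ.filter (fun i => r i = v)).card.factorial : ℝ)) / n

lemma exp_entropy (n : ℕ) [NeZero n] (r : Fin n → ZMod n) :
    Real.exp ((n : ℝ) * entropyH n r)
      = (n.factorial : ℝ)
        / ∏ v : ZMod n, ((Finset.univ.filter (fun i => r i = v)).card.factorial : ℝ) := by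
  have hn : (n:ℝ) ≠ 0 := Nat.cast_ne_zero.2 (NeZero.ne n)
  have hpos : 0 < (n.factorial : ℝ)
      / ∏ v : ZMod n, ((Finset.univ.filter (fun i => r i = v)).card.factorial : ℝ) := by
    apply div_pos
    · exact_mod_cast Nat.factorial_pos n
    · apply Finset.prod_pos
      intro v _
      exact_mod_cast Nat.factorial_pos _
  rw [entropyH]
  rw [mul_div_assoc']
  rw [mul_comm, mul_div_assoc, div_self hn, mul_one]
  exact Real.exp_log hpos

lemma fourier_sq_le (n : ℕ) [NeZero n] (r : Fin n → ZMod n) :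
    ‖fourierS n r‖ ^ 2 * Real.exp ((n : ℝ) * entropyH n r)
      ≤ (n.factorial : ℝ) / (n:ℝ)^n := by
  classical
  set T := (Finset.univ : Finset (Equiv.Perm (Fin n))).image
    (fun σ : Equiv.Perm (Fin n) => r ∘ ⇑σ) with hT
  have hsum : ∑ r' ∈ T, ‖fourierS n r'‖ ^ 2
      = (T.card : ℝ) * ‖fourierS n r‖ ^ 2 := by
    rw [Finset.sum_congr rfl (fun r' hr' => ?_), Finset.sum_const, nsmul_eq_mul]
    obtain ⟨σ, _, rfl⟩ := Finset.mem_image.mp hr'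
    rw [fourierS_comp]
  have hle : ∑ r' ∈ T, ‖fourierS n r'‖ ^ 2
      ≤ (n.factorial : ℝ) / (n:ℝ)^n := by
    rw [← parseval n]
    apply Finset.sum_le_sum_of_subset_of_nonneg (Finset.subset_univ T)
    intro i _ _
    positivity
  set P : ℝ := ∏ v : ZMod n, ((Finset.univ.filter (fun i => r i = v)).card.factorial : ℝ)
    with hP
  have hPpos : 0 < P := by
    rw [hP]
    apply Finset.prod_pos
    intro v _
    exact_mod_cast Nat.factorial_pos _
  have hcard : (T.card : ℝ) * P = (n.factorial : ℝ) := by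
    rw [hP]
    push_cast [← orbit_count n r]
    rw [hT]
  have hexp : Real.exp ((n : ℝ) * entropyH n r) = (T.card : ℝ) := by
    rw [exp_entropy n r, ← hP, ← hcard]
    field_simp
  rw [hexp, mul_comm, ← hsum]
  exact hle

/-- High-entropy minor arc bound: for any `R`, the sum of `|\widehat{1_S}(χ)|³` over
characters of entropy at least `R` is at most `exp((3-R)n/2)(n!/nⁿ)³`. -/
theorem high_entropy_minor_arcs (n : ℕ) [NeZero n] (R : ℝ) (hR : 0 < R) :
    ∑ r ∈ Finset.univ.filter (fun r : Fin n → ZMod n => R ≤ entropyH n r),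
        ‖fourierS n r‖ ^ 3 ≤
      Real.exp ((3 - R) * n / 2) * ((n.factorial : ℝ) / (n : ℝ) ^ n) ^ 3 := by
  classical
  have hn0 : (0:ℝ) < (n:ℝ) := Nat.cast_pos.2 (Nat.pos_of_ne_zero (NeZero.ne n))
  set Q : ℝ := (n.factorial : ℝ) / (n : ℝ) ^ n with hQdef
  have hQ0 : 0 < Q := by
    rw [hQdef]
    apply div_pos
    · exact_mod_cast Nat.factorial_pos n
    · positivity
  have hfac : (0:ℝ) < (n.factorial : ℝ) := by exact_mod_cast Nat.factorial_pos n
  -- e^{-n} ≤ Q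
  have hQe : Real.exp (-(n:ℝ)) ≤ Q := by
    have h := Real.pow_div_factorial_le_exp (n:ℝ) (le_of_lt hn0) n
    rw [div_le_iff₀ hfac] at h
    rw [hQdef, le_div_iff₀ (by positivity : (0:ℝ) < (n:ℝ)^n), Real.exp_neg,
      inv_mul_le_iff₀ (Real.exp_pos _)]
    exact h
  have h1Q : 1 ≤ Real.exp (n:ℝ) * Q := by
    have hmul : Real.exp (n:ℝ) * Real.exp (-(n:ℝ)) = 1 := by
      rw [← Real.exp_add]; simp
    nlinarith [mul_le_mul_of_nonneg_left hQe (le_of_lt (Real.exp_pos (n:ℝ)))]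
  set B : ℝ := Real.exp ((1 - R) * n / 2) * Q with hB
  have hB0 : 0 ≤ B := by positivity
  set E : ℝ := Real.exp (R * n) with hE
  have hE0 : 0 < E := Real.exp_pos _
  -- pointwise bound on |f̂ r|
  have hpt : ∀ r : Fin n → ZMod n, R ≤ entropyH n r → ‖fourierS n r‖ ≤ B := by
    intro r hH
    have ha0 : 0 ≤ ‖fourierS n r‖ := norm_nonneg _
    have hA : ‖fourierS n r‖ ^ 2 * E ≤ Q := by
      refine le_trans ?_ (fourier_sq_le n r)
      apply mul_le_mul_of_nonneg_left _ (by positivity)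
      rw [hE]
      apply Real.exp_le_exp.2
      nlinarith [hn0.le]
    have hBE : B ^ 2 * E = Real.exp (n:ℝ) * Q ^ 2 := by
      rw [hB, hE,
        show (Real.exp ((1 - R) * n / 2) * Q) ^ 2 * Real.exp (R * n)
          = Real.exp ((1 - R) * n / 2) * Real.exp ((1 - R) * n / 2) * Real.exp (R * n) * Q ^ 2
          by ring,
        ← Real.exp_add, ← Real.exp_add,
        show ((1 - R) * n / 2 + (1 - R) * n / 2 + R * n) = (n:ℝ) by ring]
    have hQB : Q ≤ B ^ 2 * E := by
      rw [hBE]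
      nlinarith [h1Q, hQ0]
    have hsq : ‖fourierS n r‖ ^ 2 ≤ B ^ 2 :=
      le_of_mul_le_mul_right (hA.trans hQB) hE0
    have := Real.sqrt_le_sqrt hsq
    rwa [Real.sqrt_sq ha0, Real.sqrt_sq hB0] at this
  -- sum bound
  have hsumQ : ∑ r ∈ Finset.univ.filter (fun r : Fin n → ZMod n => R ≤ entropyH n r),
      ‖fourierS n r‖ ^ 2 ≤ Q := by
    rw [hQdef, ← parseval n]
    apply Finset.sum_le_sum_of_subset_of_nonneg (Finset.filter_subset _ _)
    intro i _ _
    positivity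
  calc ∑ r ∈ Finset.univ.filter (fun r : Fin n → ZMod n => R ≤ entropyH n r),
        ‖fourierS n r‖ ^ 3
      ≤ ∑ r ∈ Finset.univ.filter (fun r : Fin n → ZMod n => R ≤ entropyH n r),
        B * ‖fourierS n r‖ ^ 2 := by
        apply Finset.sum_le_sum
        intro r hr
        have hH := (Finset.mem_filter.mp hr).2
        have hle := hpt r hH
        have ha0 : 0 ≤ ‖fourierS n r‖ := norm_nonneg _
        nlinarith [sq_nonneg (‖fourierS n r‖)]
    _ = B * ∑ r ∈ Finset.univ.filter (fun r : Fin n → ZMod n => R ≤ entropyH n r),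
        ‖fourierS n r‖ ^ 2 := by rw [Finset.mul_sum]
    _ ≤ B * Q := mul_le_mul_of_nonneg_left hsumQ hB0
    _ ≤ Real.exp ((3 - R) * n / 2) * Q ^ 3 := by
        have e3 : Real.exp ((3 - R) * n / 2)
            = Real.exp ((1 - R) * n / 2) * Real.exp (n:ℝ) := by
          rw [← Real.exp_add]
          congr 1
          ring
        rw [hB, e3]
        nlinarith [h1Q, hQ0, Real.exp_pos ((1 - R) * n / 2),
          mul_pos hQ0 hQ0, mul_le_mul_of_nonneg_left h1Q
            (le_of_lt (mul_pos (Real.exp_pos ((1 - R) * n / 2)) (mul_pos hQ0 hQ0)))]
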